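/- On Ω = [0,1] with 𝒫 the set of countably supported probability measures, a sequence of Borel functions f_n: [0,1] → ℝ satisfies E_P[|f_n|] → 0 for every P ∈ 𝒫 if and only if the sequence is uniformly bounded (sup over n and x of |f_n(x)| < ∞) and converges to 0 pointwise on [0,1]. -/

import Mathlib

open MeasureTheory Filter ENNReal

/-- On `[0,1]` with `𝔓` the countably supported probability measures, a sequence of
Borel functions satisfies `E_P[|f_n|] → 0` for every `P ∈ 𝔓` iff it is uniformly
bounded and converges to `0` pointwise. -/
theorem stmt7
    (𝔓 : Set (Measure (Set.Icc (0:ℝ) 1)))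
    (h𝔓 : 𝔓 = {P | IsProbabilityMeasure P ∧
      ∃ D : Set (Set.Icc (0:ℝ) 1), D.Countable ∧ P Dᶜ = 0})
    (f : ℕ → (Set.Icc (0:ℝ) 1) → ℝ) (hmeas : ∀ n, Measurable (f n))
    (hint : ∀ n, ∀ P ∈ 𝔓, Integrable (f n) P) :
    (∀ P ∈ 𝔓, Tendsto (fun n => ∫ x, |f n x| ∂P) atTop (nhds 0)) ↔
      ((∃ M : ℝ, ∀ n x, |f n x| ≤ M) ∧
        ∀ x, Tendsto (fun n => f n x) atTop (nhds 0)) := by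
  constructor
  · intro h
    have hdirac : ∀ x : Set.Icc (0:ℝ) 1, Measure.dirac x ∈ 𝔓 := by
      intro x
      rw [h𝔓]
      refine ⟨inferInstance, {x}, Set.countable_singleton x, ?_⟩
      rw [Measure.dirac_apply' _ (measurableSet_singleton x).compl]
      simp
    constructor
    · -- uniform boundedness
      by_contra hB
      push_neg at hB
      choose n x hx using fun k : ℕ => hB ((4:ℝ)^k)
      -- build P = ∑ 2^{-(k+1)} δ_{x k}
      set w : ℕ → Measure (Set.Icc (0:ℝ) 1) :=
        fun k => ((2:ℝ≥0∞)⁻¹)^(k+1) • Measure.dirac (x k) with hw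
      set P : Measure (Set.Icc (0:ℝ) 1) := Measure.sum w with hP
      have hgeom : ∑' k : ℕ, ((2:ℝ≥0∞)⁻¹)^(k+1) = 1 := by
        simp [pow_succ, ENNReal.tsum_mul_right, ENNReal.tsum_geometric,
          ENNReal.one_sub_inv_two]
        exact ENNReal.mul_inv_cancel (by norm_num) (by norm_num)
      have hPmem : P ∈ 𝔓 := by
        rw [h𝔓]
        refine ⟨⟨?_⟩, Set.range x, Set.countable_range x, ?_⟩
        · rw [hP, Measure.sum_apply _ MeasurableSet.univ]
          simp only [hw, Measure.smul_apply, Measure.dirac_apply_of_mem (Set.mem_univ _),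
            smul_eq_mul, mul_one]
          exact hgeom
        · rw [hP, Measure.sum_apply _ ((Set.countable_range x).measurableSet.compl)]
          have : ∀ k : ℕ, w k (Set.range x)ᶜ = 0 := by
            intro k
            rw [hw]
            simp only [Measure.smul_apply, smul_eq_mul]
            rw [Measure.dirac_apply' _ ((Set.countable_range x).measurableSet.compl)]
            simp [Set.indicator_of_notMem, Set.mem_range_self]
          simp [this]
      have hbdd : BddAbove (Set.range fun m => ∫ y, |f m y| ∂P) :=
        (h P hPmem).bddAbove_range
      obtain ⟨C, hC⟩ := hbdd
      have hkey : ∀ k : ℕ, (2:ℝ)^k / 2 ≤ ∫ y, |f (n k) y| ∂P := by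
        intro k
        have hle : w k ≤ P := Measure.le_sum w k
        have hi : Integrable (fun y => |f (n k) y|) P := (hint (n k) P hPmem).abs
        have h1 : ∫ y, |f (n k) y| ∂(w k) ≤ ∫ y, |f (n k) y| ∂P :=
          integral_mono_measure hle (ae_of_all _ fun y => abs_nonneg _) hi
        have h2 : ∫ y, |f (n k) y| ∂(w k) = (2⁻¹:ℝ)^(k+1) * |f (n k) (x k)| := by
          rw [hw, integral_smul_measure, integral_dirac]
          simp [ENNReal.toReal_pow]
        have h3 : (2⁻¹:ℝ)^(k+1) * (4:ℝ)^k ≤ (2⁻¹:ℝ)^(k+1) * |f (n k) (x k)| :=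
          mul_le_mul_of_nonneg_left (hx k).le (by positivity)
        have h4 : (2⁻¹:ℝ)^(k+1) * (4:ℝ)^k = (2:ℝ)^k / 2 := by
          rw [pow_succ, mul_comm ((2⁻¹:ℝ)^k) (2⁻¹:ℝ), mul_assoc, ← mul_pow]
          norm_num
          ring
        calc (2:ℝ)^k / 2 = (2⁻¹:ℝ)^(k+1) * (4:ℝ)^k := h4.symm
          _ ≤ (2⁻¹:ℝ)^(k+1) * |f (n k) (x k)| := h3
          _ = ∫ y, |f (n k) y| ∂(w k) := h2.symm
          _ ≤ ∫ y, |f (n k) y| ∂P := h1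
      obtain ⟨k, hk⟩ := exists_nat_gt (2 * C)
      have h5 : (2:ℝ)^k / 2 ≤ C := le_trans (hkey k) (hC ⟨n k, rfl⟩)
      have h6 : (k:ℝ) < (2:ℝ)^k := by
        exact_mod_cast (Nat.lt_two_pow_self (n := k))
      linarith
    · -- pointwise convergence
      intro x
      have := h (Measure.dirac x) (hdirac x)
      simp only [integral_dirac] at this
      exact (tendsto_zero_iff_abs_tendsto_zero _).2 this
  · rintro ⟨⟨M, hM⟩, hpt⟩ P hP
    rw [h𝔓] at hP
    obtain ⟨hprob, -⟩ := hP
    have : Tendsto (fun n => ∫ y, |f n y| ∂P) atTop (nhds (∫ _ : Set.Icc (0:ℝ) 1, (0:ℝ) ∂P)) := by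
      apply tendsto_integral_of_dominated_convergence (fun _ => M)
      · exact fun n => ((hmeas n).abs).aestronglyMeasurable
      · exact integrable_const M
      · intro n
        exact ae_of_all _ fun y => by
          rw [Real.norm_eq_abs, abs_abs]; exact hM n y
      · exact ae_of_all _ fun y => by simpa using (hpt y).abs
    simpa using this
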